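/- (Lemma: the number of Type 2 nodes) Let T be a p-string of length n ≥ 1 ending with a sentinel symbol $ ∈ Σ that occurs nowhere else in T. Then the number of Type 2 nodes of PLST(T), i.e., the cardinality of V2 = { u ∈ PrevSub(T) : u ≠ ε, u ∉ V1, and sl(u) ∈ V1 }, is smaller than 2n. -/

import Mathlib

open List

variable {σ π : Type*}

/-- The prev-encoding symbol of `w` at (0-indexed) position `i`:
constants are kept; a parameter is encoded by the distance to its
previous occurrence, or `0` if it has no previous occurrence. -/
def prevAt [DecidableEq σ] [DecidableEq π] (w : List (σ ⊕ π)) (i : ℕ) : σ ⊕ ℕ :=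
  match w[i]? with
  | some (Sum.inl a) => Sum.inl a
  | some (Sum.inr x) =>
      let s := (Finset.range i).filter (fun j => w[j]? = some (Sum.inr x))
      if h : s.Nonempty then Sum.inr (i - s.max' h) else Sum.inr 0
  | none => Sum.inr 0

/-- The prev-encoding `⟨w⟩` of a p-string `w`. -/
def prevEncode [DecidableEq σ] [DecidableEq π] (w : List (σ ⊕ π)) : List (σ ⊕ ℕ) :=
  (List.range w.length).map (prevAt w)

/-- The `k`-re-encoding `⟨u⟩ₖ` of a pv-string `u`: a numeric symbol `u[i]`
(1-indexed) is replaced by `0` whenever `u[i] ≥ i - k + 1`. -/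
def reEncode (k : ℕ) (u : List (σ ⊕ ℕ)) : List (σ ⊕ ℕ) :=
  (List.range u.length).map (fun i =>
    match u[i]? with
    | some (Sum.inl a) => Sum.inl a
    | some (Sum.inr m) => if i + 2 ≤ m + k then Sum.inr (0 : ℕ) else Sum.inr m
    | none => Sum.inr 0)

/-- The implicit suffix link `sl(u) = ⟨u[2:]⟩₁`. -/
def sl (u : List (σ ⊕ ℕ)) : List (σ ⊕ ℕ) := reEncode 1 u.tail

/-- The set of prev-encoded substrings of `T`. -/
def PrevSub [DecidableEq σ] [DecidableEq π] (T : List (σ ⊕ π)) : Set (List (σ ⊕ ℕ)) :=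
  { u | ∃ w, w <:+: T ∧ u = prevEncode w }

/-- `u` is a leaf of `PrevSub T`: it belongs to `PrevSub T` and is not a
proper prefix of any element of `PrevSub T`. -/
def IsLeaf [DecidableEq σ] [DecidableEq π] (T : List (σ ⊕ π)) (u : List (σ ⊕ ℕ)) : Prop :=
  u ∈ PrevSub T ∧ ∀ v ∈ PrevSub T, u <+: v → u = v

/-- `u` is a branching element of `PrevSub T`: two distinct one-symbol
extensions of `u` belong to `PrevSub T`. -/
def Branching [DecidableEq σ] [DecidableEq π] (T : List (σ ⊕ π)) (u : List (σ ⊕ ℕ)) : Prop :=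
  u ∈ PrevSub T ∧
    ∃ a b : σ ⊕ ℕ, a ≠ b ∧ u ++ [a] ∈ PrevSub T ∧ u ++ [b] ∈ PrevSub T

/-- The Type 1 nodes of the PLST: leaves and branching elements of `PrevSub T`. -/
def TypeOne [DecidableEq σ] [DecidableEq π] (T : List (σ ⊕ π)) (u : List (σ ⊕ ℕ)) : Prop :=
  IsLeaf T u ∨ Branching T u

/-- The Type 2 nodes of the PLST: nonempty non-Type-1 elements of `PrevSub T`
whose suffix link points at a Type 1 node. -/
def TypeTwo [DecidableEq σ] [DecidableEq π] (T : List (σ ⊕ π)) (u : List (σ ⊕ ℕ)) : Prop :=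
  u ∈ PrevSub T ∧ u ≠ [] ∧ ¬ TypeOne T u ∧ TypeOne T (sl u)

section AuxPLST
set_option linter.unusedSectionVars false
variable [DecidableEq σ] [DecidableEq π]

lemma prevEncode_length (w : List (σ ⊕ π)) : (prevEncode w).length = w.length := by
  simp [prevEncode]

lemma reEncode_length (k : ℕ) (u : List (σ ⊕ ℕ)) : (reEncode k u).length = u.length := by
  simp [reEncode]

lemma sl_length (u : List (σ ⊕ ℕ)) : (sl u).length = u.length - 1 := by
  simp [sl, reEncode_length]

lemma prevEncode_getElem? (w : List (σ ⊕ π)) (j : ℕ) :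
    (prevEncode w)[j]? = if j < w.length then some (prevAt w j) else none := by
  simp [prevEncode, List.getElem?_map, List.getElem?_range]
  split <;> simp_all

lemma prevAt_congr {w w' : List (σ ⊕ π)} (i : ℕ) (hw : ∀ j ≤ i, w[j]? = w'[j]?) :
    prevAt w i = prevAt w' i := by
  have hfil : ∀ x : π, (Finset.range i).filter (fun j => w[j]? = some (Sum.inr x))
      = (Finset.range i).filter (fun j => w'[j]? = some (Sum.inr x)) := by
    intro x
    apply Finset.filter_congr
    intro j hj
    rw [hw j (le_of_lt (Finset.mem_range.mp hj))]
  unfold prevAt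
  rw [hw i le_rfl]
  rcases h : w'[i]? with _ | (a | x) <;> simp [hfil]

lemma prevEncode_take (w : List (σ ⊕ π)) (m : ℕ) :
    prevEncode (w.take m) = (prevEncode w).take m := by
  apply List.ext_getElem
  · simp [prevEncode_length]
  · intro i h1 h2
    rw [List.getElem_take]
    have hi : i < m := by
      have := h1; simp [prevEncode_length] at this; omega
    have : ∀ j ≤ i, (w.take m)[j]? = w[j]? := by
      intro j hj
      rw [List.getElem?_take]
      simp [lt_of_le_of_lt hj hi]
    simp only [prevEncode, List.getElem_map, List.getElem_range]
    exact prevAt_congr _ this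

lemma prevAt_tail (w : List (σ ⊕ π)) (i : ℕ) :
    prevAt w.tail i = (match prevAt w (i+1) with
      | Sum.inl a => Sum.inl a
      | Sum.inr m => if i + 1 ≤ m then Sum.inr 0 else Sum.inr m) := by
  rcases hx : w[i+1]? with _ | (a | x)
  · have h1 : prevAt w.tail i = Sum.inr 0 := by
      unfold prevAt; rw [List.getElem?_tail, hx]
    have h2 : prevAt w (i+1) = Sum.inr 0 := by
      unfold prevAt; rw [hx]
    rw [h1, h2]; simp
  · have h1 : prevAt w.tail i = Sum.inl a := by
      unfold prevAt; rw [List.getElem?_tail, hx]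
    have h2 : prevAt w (i+1) = Sum.inl a := by
      unfold prevAt; rw [hx]
    rw [h1, h2]
  · have hfil : (Finset.range i).filter (fun j => w.tail[j]? = some (Sum.inr x))
        = (Finset.range i).filter (fun j => w[j+1]? = some (Sum.inr x)) := by
      apply Finset.filter_congr; intro j _; rw [List.getElem?_tail]
    by_cases h' : ((Finset.range i).filter (fun j => w[j+1]? = some (Sum.inr x))).Nonempty
    · obtain ⟨j0, hj0⟩ := h'
      have hj0' := hj0
      simp only [Finset.mem_filter, Finset.mem_range] at hj0'
      have hmem : j0 + 1 ∈ (Finset.range (i+1)).filter (fun j => w[j]? = some (Sum.inr x)) := by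
        simp only [Finset.mem_filter, Finset.mem_range]
        exact ⟨by omega, hj0'.2⟩
      have hs : ((Finset.range (i+1)).filter (fun j => w[j]? = some (Sum.inr x))).Nonempty :=
        ⟨j0 + 1, hmem⟩
      have h'' : ((Finset.range i).filter (fun j => w.tail[j]? = some (Sum.inr x))).Nonempty := by
        rw [hfil]; exact ⟨j0, hj0⟩
      set M' := ((Finset.range i).filter (fun j => w.tail[j]? = some (Sum.inr x))).max' h'' with hM'
      set M := ((Finset.range (i+1)).filter (fun j => w[j]? = some (Sum.inr x))).max' hs with hM
      have h1 : prevAt w.tail i = Sum.inr (i - M') := by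
        unfold prevAt; rw [List.getElem?_tail, hx]; dsimp only; rw [dif_pos h'']
      have h2 : prevAt w (i+1) = Sum.inr (i + 1 - M) := by
        unfold prevAt; rw [hx]; dsimp only; rw [dif_pos hs]
      have hM'mem := Finset.max'_mem _ h''
      rw [← hM', hfil] at hM'mem
      simp only [Finset.mem_filter, Finset.mem_range] at hM'mem
      have hMeq : M = M' + 1 := by
        apply Nat.le_antisymm
        · apply Finset.max'_le
          intro j hj
          simp only [Finset.mem_filter, Finset.mem_range] at hj
          rcases Nat.eq_zero_or_pos j with rfl | hjpos
          · omega
          · have hjm : j - 1 ∈ (Finset.range i).filter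
                (fun j => w.tail[j]? = some (Sum.inr x)) := by
              rw [hfil]
              simp only [Finset.mem_filter, Finset.mem_range]
              constructor
              · omega
              · have hsub : j - 1 + 1 = j := by omega
                rw [hsub]; exact hj.2
            have := Finset.le_max' _ _ hjm
            rw [← hM'] at this
            omega
        · have hmm : M' + 1 ∈ (Finset.range (i+1)).filter (fun j => w[j]? = some (Sum.inr x)) := by
            simp only [Finset.mem_filter, Finset.mem_range]
            exact ⟨by omega, hM'mem.2⟩
          have := Finset.le_max' _ _ hmm
          rw [← hM] at this
          exact this
      rw [h1, h2, hMeq]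
      have hM'lt : M' < i := hM'mem.1
      have hcond : ¬ (i + 1 ≤ i + 1 - (M' + 1)) := by omega
      simp only [if_neg hcond]
      congr 1
      omega
    · have h'' : ¬ ((Finset.range i).filter (fun j => w.tail[j]? = some (Sum.inr x))).Nonempty := by
        rw [hfil]; exact h'
      have h1 : prevAt w.tail i = Sum.inr 0 := by
        unfold prevAt; rw [List.getElem?_tail, hx]; dsimp only; rw [dif_neg h'']
      by_cases hs : ((Finset.range (i+1)).filter (fun j => w[j]? = some (Sum.inr x))).Nonempty
      · set M := ((Finset.range (i+1)).filter (fun j => w[j]? = some (Sum.inr x))).max' hs with hM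
        have h2 : prevAt w (i+1) = Sum.inr (i + 1 - M) := by
          unfold prevAt; rw [hx]; dsimp only; rw [dif_pos hs]
        have hMmem := Finset.max'_mem _ hs
        rw [← hM] at hMmem
        simp only [Finset.mem_filter, Finset.mem_range] at hMmem
        have hM0 : M = 0 := by
          by_contra hne
          apply h'
          refine ⟨M - 1, ?_⟩
          simp only [Finset.mem_filter, Finset.mem_range]
          constructor
          · omega
          · have hsub : M - 1 + 1 = M := by omega
            rw [hsub]; exact hMmem.2
        rw [h1, h2, hM0]
        simp
      · have h2 : prevAt w (i+1) = Sum.inr 0 := by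
          unfold prevAt; rw [hx]; dsimp only; rw [dif_neg hs]
        rw [h1, h2]; simp

lemma sl_prevEncode (w : List (σ ⊕ π)) : sl (prevEncode w) = prevEncode w.tail := by
  apply List.ext_getElem
  · simp [sl_length, prevEncode_length]
  · intro i h1 h2
    have hi : i < w.length - 1 := by
      simpa [sl_length, prevEncode_length] using h1
    have hgt : (prevEncode w).tail[i]? = some (prevAt w (i+1)) := by
      rw [List.getElem?_tail, prevEncode_getElem?, if_pos (by omega)]
    have hr : (prevEncode w.tail)[i] = prevAt w.tail i := by
      simp [prevEncode, List.getElem_map, List.getElem_range]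
    rw [hr, prevAt_tail]
    show (reEncode 1 (prevEncode w).tail)[i] = _
    have hl : (reEncode 1 (prevEncode w).tail)[i] =
        (match (prevEncode w).tail[i]? with
          | some (Sum.inl a) => Sum.inl a
          | some (Sum.inr m) => if i + 2 ≤ m + 1 then Sum.inr (0:ℕ) else Sum.inr m
          | none => Sum.inr 0) := by
      simp only [reEncode, List.getElem_map, List.getElem_range, List.length_tail]
      rw [List.getElem?_tail]
      rfl
    rw [hl, hgt]
    rcases prevAt w (i+1) with a | m
    · rfl
    · dsimp only
      by_cases h : i + 1 ≤ m
      · rw [if_pos (by omega), if_pos h]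
      · rw [if_neg (by omega), if_neg h]

/-- The window of length `ℓ` ending at (1-indexed) position `e`. -/
def winL {α : Type*} (T : List α) (e ℓ : ℕ) : List α := (T.drop (e - ℓ)).take ℓ

lemma winL_length {α : Type*} (T : List α) {e ℓ : ℕ} (h1 : ℓ ≤ e) (h2 : e ≤ T.length) :
    (winL T e ℓ).length = ℓ := by
  simp [winL]
  omega

lemma winL_infix {α : Type*} (T : List α) (e ℓ : ℕ) : winL T e ℓ <:+: T :=
  ((T.drop (e - ℓ)).take_prefix ℓ).isInfix.trans (T.drop_suffix (e - ℓ)).isInfix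

lemma winL_tail {α : Type*} (T : List α) {e ℓ : ℕ} (h0 : 1 ≤ ℓ) (h1 : ℓ ≤ e) :
    (winL T e ℓ).tail = winL T e (ℓ - 1) := by
  unfold winL
  rw [← List.drop_one, List.drop_take, List.drop_drop]
  congr 2 <;> omega

lemma winL_take {α : Type*} (T : List α) {e ℓ m : ℕ} (h0 : m ≤ ℓ) (h1 : ℓ ≤ e) :
    (winL T e ℓ).take m = winL T (e - (ℓ - m)) m := by
  unfold winL
  rw [List.take_take]
  congr 2 <;> omega

lemma infix_eq_winL {α : Type*} {T w : List α} (h : w <:+: T) :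
    ∃ e, w.length ≤ e ∧ e ≤ T.length ∧ w = winL T e w.length := by
  obtain ⟨s, t, hst⟩ := h
  refine ⟨s.length + w.length, by omega, by rw [← hst]; simp, ?_⟩
  unfold winL
  rw [← hst]
  have h1 : s.length + w.length - w.length = s.length := by omega
  rw [h1, List.append_assoc, List.drop_left, List.take_left]

lemma winL_zero {α : Type*} (T : List α) (e : ℕ) : winL T e 0 = [] := by simp [winL]

/-- `u` occurs in `T` ending at position `e` (1-indexed). -/
def OccAt (T : List (σ ⊕ π)) (u : List (σ ⊕ ℕ)) (e : ℕ) : Prop :=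
  e ≤ T.length ∧ u.length ≤ e ∧ u = prevEncode (winL T e u.length)

lemma occAt_mem {T : List (σ ⊕ π)} {u : List (σ ⊕ ℕ)} {e : ℕ} (h : OccAt T u e) :
    u ∈ PrevSub T :=
  ⟨winL T e u.length, winL_infix T e u.length, h.2.2⟩

lemma exists_occAt {T : List (σ ⊕ π)} {u : List (σ ⊕ ℕ)} (h : u ∈ PrevSub T) :
    ∃ e, OccAt T u e := by
  obtain ⟨w, hw, rfl⟩ := h
  obtain ⟨e, h1, h2, h3⟩ := infix_eq_winL hw
  refine ⟨e, h2, ?_, ?_⟩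
  · rw [prevEncode_length]; exact h1
  · rw [prevEncode_length, ← h3]

lemma prevEncode_nil : prevEncode ([] : List (σ ⊕ π)) = [] := by simp [prevEncode]

lemma sl_nil : sl ([] : List (σ ⊕ ℕ)) = [] := by simp [sl, reEncode]

lemma occAt_sl {T : List (σ ⊕ π)} {u : List (σ ⊕ ℕ)} {e : ℕ} (h : OccAt T u e) :
    OccAt T (sl u) e := by
  obtain ⟨he, hlu, hu⟩ := h
  rcases Nat.eq_zero_or_pos u.length with h0 | h0
  · have : u = [] := List.length_eq_zero_iff.mp h0
    subst this
    refine ⟨he, Nat.zero_le _, ?_⟩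
    rw [sl_nil]
    simp [sl_nil, winL_zero, prevEncode_nil]
  · have hsl : sl u = prevEncode (winL T e (u.length - 1)) := by
      conv_lhs => rw [hu]
      rw [sl_prevEncode, winL_tail T h0 hlu]
    have hlen : (sl u).length = u.length - 1 := sl_length u
    refine ⟨he, by omega, ?_⟩
    rw [hlen, hsl]

/-- The ending position of the leftmost occurrence. -/
noncomputable def lendL (T : List (σ ⊕ π)) (u : List (σ ⊕ ℕ)) : ℕ := sInf {e | OccAt T u e}

lemma lendL_occ {T : List (σ ⊕ π)} {u : List (σ ⊕ ℕ)} (h : u ∈ PrevSub T) :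
    OccAt T u (lendL T u) := Nat.sInf_mem (exists_occAt h)

lemma lendL_le {T : List (σ ⊕ π)} {u : List (σ ⊕ ℕ)} {e : ℕ} (h : OccAt T u e) :
    lendL T u ≤ e := Nat.sInf_le h

lemma lendL_sl_le {T : List (σ ⊕ π)} {u : List (σ ⊕ ℕ)} (h : u ∈ PrevSub T) :
    lendL T (sl u) ≤ lendL T u := lendL_le (occAt_sl (lendL_occ h))

lemma occAt_iter_sl {T : List (σ ⊕ π)} {u : List (σ ⊕ ℕ)} {e : ℕ} (h : OccAt T u e) :
    ∀ d ≤ u.length, sl^[d] u = prevEncode (winL T e (u.length - d)) := by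
  intro d
  induction d with
  | zero => intro _; simpa using h.2.2
  | succ d ih =>
    intro hd
    have h1 : 1 ≤ u.length - d := by omega
    have h2 : u.length - d ≤ e := le_trans (by omega) h.2.1
    rw [Function.iterate_succ_apply', ih (by omega), sl_prevEncode, winL_tail T h1 h2]
    congr 1

lemma mem_take {T : List (σ ⊕ π)} {u : List (σ ⊕ ℕ)} (h : u ∈ PrevSub T) (m : ℕ) :
    u.take m ∈ PrevSub T := by
  obtain ⟨w, hw, rfl⟩ := h
  exact ⟨w.take m, (w.take_prefix m).isInfix.trans hw, (prevEncode_take w m).symm⟩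

lemma mem_sl {T : List (σ ⊕ π)} {u : List (σ ⊕ ℕ)} (h : u ∈ PrevSub T) :
    sl u ∈ PrevSub T := by
  obtain ⟨w, hw, rfl⟩ := h
  exact ⟨w.tail, ((@List.drop_one _ w) ▸ w.drop_suffix 1).isInfix.trans hw, sl_prevEncode w⟩

lemma occAt_take {T : List (σ ⊕ π)} {u : List (σ ⊕ ℕ)} {e : ℕ} (h : OccAt T u e)
    {m : ℕ} (hm : m ≤ u.length) : OccAt T (u.take m) (e - (u.length - m)) := by
  obtain ⟨he, hlu, hu⟩ := h
  have hlen : (u.take m).length = m := by rw [List.length_take]; omega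
  refine ⟨by omega, by omega, ?_⟩
  rw [hlen]
  conv_lhs => rw [hu, ← prevEncode_take, winL_take T hm hlu]

lemma exists_extension {T : List (σ ⊕ π)} {u : List (σ ⊕ ℕ)} {e : ℕ}
    (h : OccAt T u e) (he : e < T.length) :
    ∃ v ∈ PrevSub T, u <+: v ∧ u ≠ v := by
  obtain ⟨he', hlu, hu⟩ := h
  set v := prevEncode (winL T (e+1) (u.length + 1)) with hv
  have hvlen : v.length = u.length + 1 := by
    rw [prevEncode_length, winL_length T (by omega) (by omega)]
  have hvmem : v ∈ PrevSub T := ⟨_, winL_infix T (e+1) (u.length+1), rfl⟩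
  have htake : v.take u.length = u := by
    rw [hv, ← prevEncode_take, winL_take T (by omega) (by omega)]
    have h1 : e + 1 - (u.length + 1 - u.length) = e := by omega
    rw [h1, ← hu]
  refine ⟨v, hvmem, ?_, ?_⟩
  · rw [← htake]; exact v.take_prefix u.length
  · intro hequ
    rw [hequ] at hvlen  -- wrong direction? lengths
    omega
lemma isLeaf_of_lendL_eq {T : List (σ ⊕ π)} {u : List (σ ⊕ ℕ)}
    (h : u ∈ PrevSub T) (hl : lendL T u = T.length) : IsLeaf T u := by
  refine ⟨h, ?_⟩
  intro v hv hpre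
  obtain ⟨ev, occv⟩ := exists_occAt hv
  have hlen_le : u.length ≤ v.length := hpre.length_le
  have htake : v.take u.length = u := (List.prefix_iff_eq_take.mp hpre).symm
  have hocc : OccAt T u (ev - (v.length - u.length)) := by
    have := occAt_take occv hlen_le
    rwa [htake] at this
  have h1 := lendL_le hocc
  have h2 := occv.1
  have h3 := occv.2.1
  rw [hl] at h1
  have : v.length ≤ u.length := by omega
  exact hpre.eq_of_length_le this

lemma lendL_le_length {T : List (σ ⊕ π)} {u : List (σ ⊕ ℕ)} (h : u ∈ PrevSub T) :
    lendL T u ≤ T.length := (lendL_occ h).1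

lemma length_le_lendL {T : List (σ ⊕ π)} {u : List (σ ⊕ ℕ)} (h : u ∈ PrevSub T) :
    u.length ≤ lendL T u := (lendL_occ h).2.1

lemma lendL_lt_of_not_leaf {T : List (σ ⊕ π)} {u : List (σ ⊕ ℕ)}
    (h : u ∈ PrevSub T) (hnl : ¬ IsLeaf T u) : lendL T u < T.length := by
  rcases lt_or_eq_of_le (lendL_le_length h) with h' | h'
  · exact h'
  · exact absurd (isLeaf_of_lendL_eq h h') hnl

lemma occAt_length_of_isLeaf {T : List (σ ⊕ π)} {u : List (σ ⊕ ℕ)}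
    (h : IsLeaf T u) : OccAt T u T.length := by
  rcases lt_or_eq_of_le (lendL_le_length h.1) with h' | h'
  · obtain ⟨v, hv, hpre, hne⟩ := exists_extension (lendL_occ h.1) h'
    exact absurd (h.2 v hv hpre) hne
  · rw [← h']
    exact lendL_occ h.1

lemma no_shorter_occ {T : List (σ ⊕ π)} {u v : List (σ ⊕ ℕ)}
    (hv : v ∈ PrevSub T) (hav : lendL T (sl v) < lendL T v)
    (hlen : u.length < v.length) (hlend : lendL T u = lendL T v)
    (hocc : OccAt T u (lendL T v)) : False := by
  set e := lendL T v with he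
  set e' := lendL T (sl v) with he'
  have occv : OccAt T v e := lendL_occ hv
  have occsv : OccAt T (sl v) e' := lendL_occ (mem_sl hv)
  have hsv1 := occsv.2.1
  have hslv : (sl v).length = v.length - 1 := sl_length v
  have hm : u.length ≤ (sl v).length := by omega
  have s2 := occAt_iter_sl occsv ((sl v).length - u.length) (by omega)
  have hd2 : (sl v).length - ((sl v).length - u.length) = u.length := by omega
  rw [hd2] at s2
  have s1 := occAt_iter_sl occv (v.length - u.length) (by omega)
  have hd1 : v.length - (v.length - u.length) = u.length := by omega
  rw [hd1] at s1
  have hiter : sl^[(sl v).length - u.length] (sl v) = sl^[v.length - u.length] v := by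
    rw [← Function.iterate_succ_apply]
    congr 1
    omega
  have hueq : u = prevEncode (winL T e u.length) := hocc.2.2
  have hue' : u = prevEncode (winL T e' u.length) := by
    rw [← s2, hiter, s1, ← hueq]
  have hocc' : OccAt T u e' := ⟨occsv.1, by omega, hue'⟩
  have hlt : lendL T u ≤ e' := lendL_le hocc'
  omega

lemma eq_of_lendL_eq_length_eq {T : List (σ ⊕ π)} {u v : List (σ ⊕ ℕ)}
    (hu : u ∈ PrevSub T) (hv : v ∈ PrevSub T)
    (hlend : lendL T u = lendL T v) (hlen : u.length = v.length) : u = v := by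
  have h1 : u = prevEncode (winL T (lendL T u) u.length) := (lendL_occ hu).2.2
  have h2 : v = prevEncode (winL T (lendL T v) v.length) := (lendL_occ hv).2.2
  rw [h1, h2, hlend, hlen]

lemma A_inj {T : List (σ ⊕ π)} {u v : List (σ ⊕ ℕ)}
    (hu : u ∈ PrevSub T) (hv : v ∈ PrevSub T)
    (hau : lendL T (sl u) < lendL T u) (hav : lendL T (sl v) < lendL T v)
    (heq : lendL T u = lendL T v) : u = v := by
  rcases Nat.lt_trichotomy u.length v.length with h | h | h
  · exact absurd (no_shorter_occ hv hav h heq (heq ▸ lendL_occ hu)) not_false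
  · exact eq_of_lendL_eq_length_eq hu hv heq h
  · exact absurd (no_shorter_occ hu hau h heq.symm (heq.symm ▸ lendL_occ hv)) not_false

lemma B_inj {T : List (σ ⊕ π)} {u v : List (σ ⊕ ℕ)}
    (hu : u ∈ PrevSub T) (hv : v ∈ PrevSub T) (hneu : u ≠ []) (hnev : v ≠ [])
    (hbu : lendL T (sl u) = lendL T u) (hbv : lendL T (sl v) = lendL T v)
    (hsl : sl u = sl v) : u = v := by
  have h1 : lendL T u = lendL T v := by rw [← hbu, ← hbv, hsl]
  have h2 : u.length = v.length := by
    have hu' := sl_length u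
    have hv' := sl_length v
    have hlu : 1 ≤ u.length := List.length_pos_iff.mpr hneu
    have hlv : 1 ≤ v.length := List.length_pos_iff.mpr hnev
    rw [hsl] at hu'
    omega
  exact eq_of_lendL_eq_length_eq hu hv h1 h2

lemma tail_take' {α : Type*} (w : List α) (m : ℕ) : (w.take m).tail = w.tail.take (m - 1) := by
  rw [← List.drop_one, ← List.drop_one, List.drop_take]

lemma sl_branching {T : List (σ ⊕ π)} {u : List (σ ⊕ ℕ)} (h : TypeTwo T u) :
    Branching T (sl u) := by
  obtain ⟨hmem, hne, hnot1, h1sl⟩ := h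
  rcases h1sl with hleaf | hbr
  · exfalso
    -- sl u is a proper prefix of some element, so not a leaf
    have hnleaf : ¬ IsLeaf T u := fun hl => hnot1 (Or.inl hl)
    have hex : ∃ v ∈ PrevSub T, u <+: v ∧ u ≠ v := by
      by_contra hc
      push_neg at hc
      exact hnleaf ⟨hmem, hc⟩
    obtain ⟨v, hv, hpre, hnev⟩ := hex
    have hlenlt : u.length < v.length := by
      rcases lt_or_eq_of_le hpre.length_le with h' | h'
      · exact h'
      · exact absurd (hpre.eq_of_length_le (le_of_eq h'.symm)) hnev
    set v' := v.take (u.length + 1) with hv'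
    have hv'mem : v' ∈ PrevSub T := mem_take hv _
    obtain ⟨w', hw', hwe⟩ := hv'mem
    have hv'len : v'.length = u.length + 1 := by
      rw [hv', List.length_take]; omega
    have hutake : u = v'.take u.length := by
      rw [hv', List.take_take]
      have : u.length ⊓ (u.length + 1) = u.length := by omega
      rw [this]
      exact List.prefix_iff_eq_take.mp hpre
    have hw'len : w'.length = u.length + 1 := by
      have := prevEncode_length w'
      rw [← hwe] at this
      omega
    have hueq : u = prevEncode (w'.take u.length) := by
      rw [prevEncode_take, ← hwe, ← hutake]
    have hslu : sl u = prevEncode (w'.tail.take (u.length - 1)) := by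
      conv_lhs => rw [hueq]
      rw [sl_prevEncode, tail_take']
    have hslv' : sl v' = prevEncode w'.tail := by
      rw [hwe, sl_prevEncode]
    have hpre2 : sl u <+: sl v' := by
      rw [hslu, hslv', prevEncode_take]
      exact List.take_prefix _ _
    have hlen2 : (sl u).length < (sl v').length := by
      have h1 := sl_length u
      have h2 := sl_length v'
      have : 1 ≤ u.length := List.length_pos_iff.mpr hne
      omega
    have := hleaf.2 (sl v') (mem_sl ⟨w', hw', hwe⟩) hpre2
    rw [this] at hlen2
    omega
  · exact hbr

open Classical in
/-- In a finite prefix-closed family of lists, there are fewer branching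
elements than leaves. -/
theorem tree_count {α : Type*} (S : Finset (List α)) :
    (∀ w ∈ S, w ≠ [] → w.dropLast ∈ S) → S.Nonempty →
    (S.filter (fun w => ∃ a b : α, a ≠ b ∧ w ++ [a] ∈ S ∧ w ++ [b] ∈ S)).card <
    (S.filter (fun w => ∀ v ∈ S, w <+: v → w = v)).card := by
  induction S using Finset.strongInduction with
  | _ S ih =>
    intro hcl hne
    obtain ⟨m, hm, hmax⟩ := S.exists_max_image (fun w => w.length) hne
    have hmleaf : m ∈ S.filter (fun w => ∀ v ∈ S, w <+: v → w = v) := by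
      refine Finset.mem_filter.mpr ⟨hm, fun v hv hp => hp.eq_of_length_le (hmax v hv)⟩
    have hlfpos : 0 < (S.filter (fun w => ∀ v ∈ S, w <+: v → w = v)).card :=
      Finset.card_pos.mpr ⟨m, hmleaf⟩
    by_cases hm0 : m = []
    · have hempty : S.filter (fun w => ∃ a b : α, a ≠ b ∧ w ++ [a] ∈ S ∧ w ++ [b] ∈ S) = ∅ := by
        refine Finset.filter_eq_empty_iff.mpr ?_
        intro w hw ⟨a, b, hab, ha, hb⟩
        have h1 := hmax _ ha
        have h2 := hmax w hw
        subst hm0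
        simp at h1
      rw [hempty]
      simpa using hlfpos
    · set p := m.dropLast with hp
      have hpS : p ∈ S := hcl m hm hm0
      have hmlen : 1 ≤ m.length := List.length_pos_iff.mpr hm0
      have hplen : p.length = m.length - 1 := @List.length_dropLast _ m
      have hpne : p ≠ m := by
        intro h
        have := congrArg List.length h
        omega
      set S' := S.erase m with hS'
      have hS'ss : S' ⊂ S := Finset.erase_ssubset hm
      have hpS' : p ∈ S' := Finset.mem_erase.mpr ⟨hpne, hpS⟩
      have hne' : S'.Nonempty := ⟨p, hpS'⟩
      have hmS' : m ∉ S' := Finset.notMem_erase m S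
      have hcl' : ∀ w ∈ S', w ≠ [] → w.dropLast ∈ S' := by
        intro w hw hwne
        obtain ⟨hwm, hwS⟩ := Finset.mem_erase.mp hw
        refine Finset.mem_erase.mpr ⟨?_, hcl w hwS hwne⟩
        intro h
        have h1 := congrArg List.length h
        have h2 := @List.length_dropLast _ w
        have h3 : 1 ≤ w.length := List.length_pos_iff.mpr hwne
        have h4 := hmax w hwS
        omega
      have IH := ih S' hS'ss hcl' hne'
      -- prefix of m that is not m is a prefix of p
      have hprefp : ∀ w : List α, w <+: m → w ≠ m → w <+: p := by
        intro w hw hwm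
        rw [hp, List.dropLast_eq_take]
        refine List.prefix_take_iff.mpr ⟨hw, ?_⟩
        have := hw.length_le
        rcases lt_or_eq_of_le this with h | h
        · omega
        · exact absurd (hw.eq_of_length_le (le_of_eq h.symm)) hwm
      -- leaf set identity
      have hLF : S.filter (fun w => ∀ v ∈ S, w <+: v → w = v)
          = insert m ((S'.filter (fun w => ∀ v ∈ S', w <+: v → w = v)).erase p) := by
        ext w
        simp only [Finset.mem_filter, Finset.mem_insert, Finset.mem_erase]
        constructor
        · rintro ⟨hwS, hlf⟩
          by_cases hwm : w = m
          · exact Or.inl hwm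
          · refine Or.inr ⟨?_, ⟨Finset.mem_erase.mpr ⟨hwm, hwS⟩, ?_⟩⟩
            · intro hwp
              subst hwp
              exact hpne (hlf m hm (List.dropLast_prefix m))
            · intro v hv hpre
              exact hlf v (Finset.mem_of_mem_erase hv) hpre
        · rintro (rfl | ⟨hwp, hwS', hlf'⟩)
          · exact ⟨hm, fun v hv hp' => hp'.eq_of_length_le (hmax v hv)⟩
          · refine ⟨Finset.mem_of_mem_erase hwS', ?_⟩
            intro v hv hpre
            by_cases hvm : v = m
            · subst hvm
              have hwm : w ≠ v := Finset.mem_erase.mp hwS' |>.1 |> fun h => h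
              exact absurd (hlf' p hpS' (hprefp w hpre hwm)) hwp
            · exact hlf' v (Finset.mem_erase.mpr ⟨hvm, hv⟩) hpre
      have hmnotin : m ∉ (S'.filter (fun w => ∀ v ∈ S', w <+: v → w = v)).erase p := by
        intro h
        exact hmS' (Finset.mem_filter.mp (Finset.mem_of_mem_erase h)).1
      have hLFcard : (S.filter (fun w => ∀ v ∈ S, w <+: v → w = v)).card
          = ((S'.filter (fun w => ∀ v ∈ S', w <+: v → w = v)).erase p).card + 1 := by
        rw [hLF, Finset.card_insert_of_notMem hmnotin]
      -- branching subset relations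
      have hb1 : S'.filter (fun w => ∃ a b : α, a ≠ b ∧ w ++ [a] ∈ S' ∧ w ++ [b] ∈ S')
          ⊆ S.filter (fun w => ∃ a b : α, a ≠ b ∧ w ++ [a] ∈ S ∧ w ++ [b] ∈ S) := by
        intro w hw
        obtain ⟨hwS', a, b, hab, ha, hb⟩ := Finset.mem_filter.mp hw
        exact Finset.mem_filter.mpr ⟨Finset.mem_of_mem_erase hwS',
          a, b, hab, Finset.mem_of_mem_erase ha, Finset.mem_of_mem_erase hb⟩
      have hb2 : S.filter (fun w => ∃ a b : α, a ≠ b ∧ w ++ [a] ∈ S ∧ w ++ [b] ∈ S)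
          ⊆ insert p (S'.filter (fun w => ∃ a b : α, a ≠ b ∧ w ++ [a] ∈ S' ∧ w ++ [b] ∈ S')) := by
        intro w hw
        obtain ⟨hwS, a, b, hab, ha, hb⟩ := Finset.mem_filter.mp hw
        by_cases hwp : w = p
        · exact Finset.mem_insert.mpr (Or.inl hwp)
        · refine Finset.mem_insert.mpr (Or.inr (Finset.mem_filter.mpr ⟨?_, a, b, hab, ?_, ?_⟩))
          · refine Finset.mem_erase.mpr ⟨?_, hwS⟩
            intro hwm
            subst hwm
            have := hmax _ ha
            simp at this
          · refine Finset.mem_erase.mpr ⟨?_, ha⟩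
            intro h
            exact hwp (by rw [hp, ← h, List.dropLast_concat])
          · refine Finset.mem_erase.mpr ⟨?_, hb⟩
            intro h
            exact hwp (by rw [hp, ← h, List.dropLast_concat])
      by_cases hpb : p ∈ S'.filter (fun w => ∃ a b : α, a ≠ b ∧ w ++ [a] ∈ S' ∧ w ++ [b] ∈ S')
      · -- p branching in S'; then p is not a leaf of S'
        have hpnl : p ∉ S'.filter (fun w => ∀ v ∈ S', w <+: v → w = v) := by
          intro h
          obtain ⟨_, a, b, hab, ha, hb⟩ := Finset.mem_filter.mp hpb
          have := (Finset.mem_filter.mp h).2 (p ++ [a]) ha ⟨[a], rfl⟩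
          have hlen := congrArg List.length this
          simp at hlen
        have herase : (S'.filter (fun w => ∀ v ∈ S', w <+: v → w = v)).erase p
            = S'.filter (fun w => ∀ v ∈ S', w <+: v → w = v) :=
          Finset.erase_eq_of_notMem hpnl
        have hins : insert p (S'.filter (fun w => ∃ a b : α, a ≠ b ∧ w ++ [a] ∈ S' ∧ w ++ [b] ∈ S'))
            = S'.filter (fun w => ∃ a b : α, a ≠ b ∧ w ++ [a] ∈ S' ∧ w ++ [b] ∈ S') :=
          Finset.insert_eq_self.mpr hpb
        have hle := Finset.card_le_card (hins ▸ hb2)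
        rw [hLFcard, herase]
        omega
      · by_cases hpl : p ∈ S'.filter (fun w => ∀ v ∈ S', w <+: v → w = v)
        · -- p is a leaf of S': then p is not branching in S
          have hpnb : p ∉ S.filter (fun w => ∃ a b : α, a ≠ b ∧ w ++ [a] ∈ S ∧ w ++ [b] ∈ S) := by
            intro h
            obtain ⟨_, a, b, hab, ha, hb⟩ := Finset.mem_filter.mp h
            have hext : ∀ c : α, p ++ [c] ∈ S → p ++ [c] = m := by
              intro c hc
              by_contra hcm
              have hcS' : p ++ [c] ∈ S' := Finset.mem_erase.mpr ⟨hcm, hc⟩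
              have := (Finset.mem_filter.mp hpl).2 (p ++ [c]) hcS' ⟨[c], rfl⟩
              have hlen := congrArg List.length this
              simp at hlen
            have h1 := hext a ha
            have h2 := hext b hb
            rw [← h2] at h1
            have := List.append_cancel_left h1
            simp at this
            exact hab this
          have hsub : S.filter (fun w => ∃ a b : α, a ≠ b ∧ w ++ [a] ∈ S ∧ w ++ [b] ∈ S)
              ⊆ S'.filter (fun w => ∃ a b : α, a ≠ b ∧ w ++ [a] ∈ S' ∧ w ++ [b] ∈ S') := by
            intro w hw
            rcases Finset.mem_insert.mp (hb2 hw) with rfl | h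
            · exact absurd hw hpnb
            · exact h
          have hle := Finset.card_le_card hsub
          have hc1 := Finset.card_erase_of_mem hpl
          have hc2 : 0 < (S'.filter (fun w => ∀ v ∈ S', w <+: v → w = v)).card :=
            Finset.card_pos.mpr ⟨p, hpl⟩
          rw [hLFcard, hc1]
          omega
        · have herase : (S'.filter (fun w => ∀ v ∈ S', w <+: v → w = v)).erase p
              = S'.filter (fun w => ∀ v ∈ S', w <+: v → w = v) :=
            Finset.erase_eq_of_notMem hpl
          have hle := Finset.card_le_card hb2
          have hins := Finset.card_insert_le p
            (S'.filter (fun w => ∃ a b : α, a ≠ b ∧ w ++ [a] ∈ S' ∧ w ++ [b] ∈ S'))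
          rw [hLFcard, herase]
          omega

lemma prevSub_finite (T : List (σ ⊕ π)) : (PrevSub T).Finite := by
  have h : PrevSub T ⊆ (fun p : ℕ × ℕ => prevEncode (winL T p.1 p.2)) ''
      (Set.Icc 0 T.length ×ˢ Set.Icc 0 T.length) := by
    intro u hu
    obtain ⟨e, he⟩ := exists_occAt hu
    exact ⟨(e, u.length), ⟨⟨Nat.zero_le _, he.1⟩, ⟨Nat.zero_le _, le_trans he.2.1 he.1⟩⟩,
      he.2.2.symm⟩
  exact (((Set.finite_Icc 0 T.length).prod (Set.finite_Icc 0 T.length)).image _).subset h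

lemma nil_mem_prevSub (T : List (σ ⊕ π)) : ([] : List (σ ⊕ ℕ)) ∈ PrevSub T :=
  ⟨[], List.nil_infix, prevEncode_nil.symm⟩

lemma occAt_nil (T : List (σ ⊕ π)) : OccAt T ([] : List (σ ⊕ ℕ)) 0 := by
  refine ⟨Nat.zero_le _, by simp, ?_⟩
  simp [winL_zero, prevEncode_nil]

lemma nil_not_leaf {T : List (σ ⊕ π)} (hT : 0 < T.length) : ¬ IsLeaf T ([] : List (σ ⊕ ℕ)) := by
  intro hl
  obtain ⟨v, hv, hpre, hne⟩ := exists_extension (occAt_nil T) hT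
  exact hne (hl.2 v hv hpre)

open Classical in
lemma branching_card_le (T : List (σ ⊕ π)) (hT : 0 < T.length) :
    {w : List (σ ⊕ ℕ) | Branching T w}.ncard ≤ T.length - 1 := by
  set S0 := (prevSub_finite T).toFinset with hS0
  have hmem : ∀ w : List (σ ⊕ ℕ), w ∈ S0 ↔ w ∈ PrevSub T := by
    intro w; rw [hS0, Set.Finite.mem_toFinset]
  have hcl : ∀ w ∈ S0, w ≠ [] → w.dropLast ∈ S0 := by
    intro w hw hwne
    rw [hmem] at hw ⊢
    rw [List.dropLast_eq_take]
    exact mem_take hw _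
  have hne : S0.Nonempty := ⟨[], (hmem _).mpr (nil_mem_prevSub T)⟩
  have htree0 := tree_count S0 hcl hne
  have htree : (S0.filter (fun w => ∃ a b : σ ⊕ ℕ, a ≠ b ∧ w ++ [a] ∈ S0 ∧ w ++ [b] ∈ S0)).card
      < (S0.filter (fun w => ∀ v ∈ S0, w <+: v → w = v)).card := by
    convert htree0 using 3 <;> exact Subsingleton.elim _ _
  -- leaves have distinct lengths in Icc 1 n
  have hleafcard : (S0.filter (fun w => ∀ v ∈ S0, w <+: v → w = v)).card
      ≤ (Finset.Icc 1 T.length).card := by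
    apply Finset.card_le_card_of_injOn (fun w => w.length)
    · intro w hw
      obtain ⟨hwS, hlf⟩ := Finset.mem_filter.mp hw
      rw [hmem] at hwS
      have hisleaf : IsLeaf T w := ⟨hwS, fun v hv hp => hlf v ((hmem v).mpr hv) hp⟩
      have hocc := occAt_length_of_isLeaf hisleaf
      have h1 : w ≠ [] := by
        intro h
        exact nil_not_leaf hT (h ▸ hisleaf)
      have h2 : 1 ≤ w.length := List.length_pos_iff.mpr h1
      exact Finset.mem_Icc.mpr ⟨h2, hocc.2.1⟩
    · intro w1 hw1 w2 hw2 hlen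
      obtain ⟨hw1S, hlf1⟩ := Finset.mem_filter.mp hw1
      obtain ⟨hw2S, hlf2⟩ := Finset.mem_filter.mp hw2
      rw [hmem] at hw1S hw2S
      have hocc1 := occAt_length_of_isLeaf ⟨hw1S, fun v hv hp => hlf1 v ((hmem v).mpr hv) hp⟩
      have hocc2 := occAt_length_of_isLeaf ⟨hw2S, fun v hv hp => hlf2 v ((hmem v).mpr hv) hp⟩
      have hlen' : w1.length = w2.length := hlen
      rw [hocc1.2.2, hocc2.2.2, hlen']
  have hbrset : {w : List (σ ⊕ ℕ) | Branching T w}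
      = ↑(S0.filter (fun w => ∃ a b : σ ⊕ ℕ, a ≠ b ∧ w ++ [a] ∈ S0 ∧ w ++ [b] ∈ S0)) := by
    ext w
    simp only [Set.mem_setOf_eq, Finset.coe_filter, Finset.mem_coe, Finset.mem_filter]
    constructor
    · rintro ⟨hwmem, a, b, hab, ha, hb⟩
      exact ⟨(hmem w).mpr hwmem, a, b, hab, (hmem _).mpr ha, (hmem _).mpr hb⟩
    · rintro ⟨hwmem, a, b, hab, ha, hb⟩
      exact ⟨(hmem w).mp hwmem, a, b, hab, (hmem _).mp ha, (hmem _).mp hb⟩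
  rw [hbrset, Set.ncard_coe_finset]
  have hIcc : (Finset.Icc 1 T.length).card = T.length := by
    rw [Nat.card_Icc]
    omega
  omega
end AuxPLST

/-- For a text of length `n ≥ 1` ending with a sentinel occurring nowhere else,
the number of Type 2 nodes of `PLST(T)` is smaller than `2n`. -/
theorem card_type2_lt [DecidableEq σ] [DecidableEq π]
    (T' : List (σ ⊕ π)) (d : σ) (T : List (σ ⊕ π))
    (hT : T = T' ++ [Sum.inl d]) (hd : Sum.inl d ∉ T') :
    {u : List (σ ⊕ ℕ) | TypeTwo T u}.Finite ∧
      {u : List (σ ⊕ ℕ) | TypeTwo T u}.ncard < 2 * T.length := by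
  have hn : 1 ≤ T.length := by rw [hT]; simp
  have hfin : {u : List (σ ⊕ ℕ) | TypeTwo T u}.Finite :=
    (prevSub_finite T).subset (fun u hu => hu.1)
  refine ⟨hfin, ?_⟩
  set A : Set (List (σ ⊕ ℕ)) := {u | TypeTwo T u ∧ lendL T (sl u) < lendL T u} with hA
  set B : Set (List (σ ⊕ ℕ)) := {u | TypeTwo T u ∧ lendL T (sl u) = lendL T u} with hB
  have hU : {u : List (σ ⊕ ℕ) | TypeTwo T u} = A ∪ B := by
    ext u
    simp only [Set.mem_setOf_eq, Set.mem_union, hA, hB, Set.mem_setOf_eq]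
    constructor
    · intro hu
      rcases lt_or_eq_of_le (lendL_sl_le hu.1) with h | h
      · exact Or.inl ⟨hu, h⟩
      · exact Or.inr ⟨hu, h⟩
    · rintro (⟨hu, _⟩ | ⟨hu, _⟩) <;> exact hu
  have hAcard : A.ncard ≤ T.length - 1 := by
    have hinj : Set.InjOn (lendL T) A := by
      intro u hu v hv heq
      exact A_inj hu.1.1 hv.1.1 hu.2 hv.2 heq
    have himg : lendL T '' A ⊆ Set.Icc 1 (T.length - 1) := by
      rintro _ ⟨u, hu, rfl⟩
      have h1 : u ≠ [] := hu.1.2.1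
      have h2 : 1 ≤ u.length := List.length_pos_iff.mpr h1
      have h3 : u.length ≤ lendL T u := length_le_lendL hu.1.1
      have h4 : lendL T u < T.length := by
        apply lendL_lt_of_not_leaf hu.1.1
        intro hl
        exact hu.1.2.2.1 (Or.inl hl)
      exact Set.mem_Icc.mpr ⟨by omega, by omega⟩
    calc A.ncard = (lendL T '' A).ncard := (Set.ncard_image_of_injOn hinj).symm
      _ ≤ (Set.Icc 1 (T.length - 1)).ncard :=
          Set.ncard_le_ncard himg (Set.finite_Icc _ _)
      _ ≤ T.length - 1 := by
          rw [← Finset.coe_Icc, Set.ncard_coe_finset, Nat.card_Icc]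
          omega
  have hBcard : B.ncard ≤ T.length - 1 := by
    have hinj : Set.InjOn sl B := by
      intro u hu v hv heq
      exact B_inj hu.1.1 hv.1.1 hu.1.2.1 hv.1.2.1 hu.2 hv.2 heq
    have himg : sl '' B ⊆ {w : List (σ ⊕ ℕ) | Branching T w} := by
      rintro _ ⟨u, hu, rfl⟩
      exact sl_branching hu.1
    have hbrfin : {w : List (σ ⊕ ℕ) | Branching T w}.Finite :=
      (prevSub_finite T).subset (fun w hw => hw.1)
    calc B.ncard = (sl '' B).ncard := (Set.ncard_image_of_injOn hinj).symm
      _ ≤ {w : List (σ ⊕ ℕ) | Branching T w}.ncard := Set.ncard_le_ncard himg hbrfin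
      _ ≤ T.length - 1 := branching_card_le T (by omega)
  have hle := Set.ncard_union_le A B
  rw [hU]
  have := hAcard
  have := hBcard
  omega
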